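/- Let n, k, r be integers with k, r ≥ 2 and n ≥ 2k, and write n = pk + q with p, q integers and 1 ≤ q ≤ k. The r-uniform hypergraph H_U(n; k, r) = ((p − 1)K_k^r ∪ K_q^r) ∨_r (K_k^r)^c satisfies |E(H_U(n; k, r))| ≤ C(n, r) − C(n − k, r) + (n/k − 2)·C(k, r), with equality when k divides n, where C(a, b) denotes the binomial coefficient (equal to 0 when b > a). -/

import Mathlib

/-- A finite hypergraph: a finite vertex set together with a finite set of
non-empty edges, each a subset of the vertex set. -/
structure FinHypergraph where
  verts : Finset ℕ
  edges : Finset (Finset ℕ)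
  edge_sub : ∀ e ∈ edges, e ⊆ verts
  edge_nonempty : ∀ e ∈ edges, e.Nonempty

namespace FinHypergraph

/-- `H` is `r`-uniform if every edge has cardinality `r`. -/
def IsUniform (H : FinHypergraph) (r : ℕ) : Prop := ∀ e ∈ H.edges, e.card = r

/-- `H'` is a subhypergraph of `H`. -/
def IsSub (H' H : FinHypergraph) : Prop := H'.verts ⊆ H.verts ∧ H'.edges ⊆ H.edges

/-- Two vertices are adjacent if some edge contains both. -/
def Adj (H : FinHypergraph) (u v : ℕ) : Prop := ∃ e ∈ H.edges, u ∈ e ∧ v ∈ e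

/-- `H` is connected if every pair of vertices is joined by a path
(equivalently, a walk, i.e. is reachable via the adjacency relation). -/
def Connected (H : FinHypergraph) : Prop :=
  ∀ u ∈ H.verts, ∀ v ∈ H.verts, Relation.ReflTransGen H.Adj u v

/-- The subhypergraph of `H` induced by the vertex set `Y`. -/
def induce (H : FinHypergraph) (Y : Finset ℕ) : FinHypergraph where
  verts := H.verts ∩ Y
  edges := H.edges.filter (fun e => e ⊆ Y)
  edge_sub := by
    intro e he
    simp only [Finset.mem_filter] at he
    exact Finset.subset_inter (H.edge_sub e he.1) he.2
  edge_nonempty := by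
    intro e he
    simp only [Finset.mem_filter] at he
    exact H.edge_nonempty e he.1

/-- `X` is a vertex-cut of `H` if deleting `X` leaves a disconnected hypergraph. -/
def IsVertexCut (H : FinHypergraph) (X : Finset ℕ) : Prop :=
  X ⊆ H.verts ∧ ¬ (H.induce (H.verts \ X)).Connected

open Classical in
/-- The vertex-connectivity of `H`: the minimum cardinality of a vertex-cut if one
exists, and `|V(H)| - 1` otherwise. -/
noncomputable def kappa (H : FinHypergraph) : ℕ :=
  if ∃ X, H.IsVertexCut X then sInf {m | ∃ X, H.IsVertexCut X ∧ X.card = m}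
  else H.verts.card - 1

/-- `κ̄(H)`: the maximum vertex-connectivity over all subhypergraphs of `H`. -/
noncomputable def kappaBar (H : FinHypergraph) : ℕ :=
  sSup {m | ∃ H' : FinHypergraph, H'.IsSub H ∧ H'.kappa = m}

/-- `H + e`: add the edge `e` (a non-empty subset of the vertices) to `H`. -/
def addEdge (H : FinHypergraph) (e : Finset ℕ) : FinHypergraph where
  verts := H.verts
  edges := if e ⊆ H.verts ∧ e.Nonempty then insert e H.edges else H.edges
  edge_sub := by
    intro f hf
    split at hf
    · rcases Finset.mem_insert.mp hf with rfl | hf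
      · exact (by assumption : f ⊆ H.verts ∧ f.Nonempty).1
      · exact H.edge_sub f hf
    · exact H.edge_sub f hf
  edge_nonempty := by
    intro f hf
    split at hf
    · rcases Finset.mem_insert.mp hf with rfl | hf
      · exact (by assumption : f ⊆ H.verts ∧ f.Nonempty).2
      · exact H.edge_nonempty f hf
    · exact H.edge_nonempty f hf

/-- `H + F`: add a set `F` of edges to `H`. -/
def addEdges (H : FinHypergraph) (F : Finset (Finset ℕ)) : FinHypergraph where
  verts := H.verts
  edges := H.edges ∪ F.filter (fun e => e ⊆ H.verts ∧ e.Nonempty)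
  edge_sub := by
    intro f hf
    rcases Finset.mem_union.mp hf with hf | hf
    · exact H.edge_sub f hf
    · exact (Finset.mem_filter.mp hf).2.1
  edge_nonempty := by
    intro f hf
    rcases Finset.mem_union.mp hf with hf | hf
    · exact H.edge_nonempty f hf
    · exact (Finset.mem_filter.mp hf).2.2

/-- `H` is vertex-`k`-maximal (as an `r`-uniform hypergraph): `κ̄(H) ≤ k`, but adding
any edge of the complement `H^c` creates a subhypergraph of connectivity at least `k + 1`. -/
def VertexKMaximal (H : FinHypergraph) (r k : ℕ) : Prop :=
  H.IsUniform r ∧ H.kappaBar ≤ k ∧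
    ∀ e : Finset ℕ, e ⊆ H.verts → e.card = r → e ∉ H.edges →
      k + 1 ≤ (H.addEdge e).kappaBar

/-- The complete `r`-uniform hypergraph on the vertex set `V`. -/
def completeHG (V : Finset ℕ) (r : ℕ) : FinHypergraph where
  verts := V
  edges := (V.powersetCard r).filter (fun e => e.Nonempty)
  edge_sub := by
    intro e he
    simp only [Finset.mem_filter, Finset.mem_powersetCard] at he
    exact he.1.1
  edge_nonempty := by
    intro e he
    exact (Finset.mem_filter.mp he).2

/-- The hypergraph on vertex set `V` with no edges. -/
def emptyHG (V : Finset ℕ) : FinHypergraph where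
  verts := V
  edges := ∅
  edge_sub := by simp
  edge_nonempty := by simp

/-- The `r`-join `H₁ ∨_r H₂`: the union of `H₁` and `H₂` together with all
`r`-element subsets of `V(H₁) ∪ V(H₂)` meeting both `V(H₁)` and `V(H₂)`. -/
def rJoin (H1 H2 : FinHypergraph) (r : ℕ) : FinHypergraph where
  verts := H1.verts ∪ H2.verts
  edges := H1.edges ∪ H2.edges ∪
    ((H1.verts ∪ H2.verts).powersetCard r).filter
      (fun e => (e ∩ H1.verts).Nonempty ∧ (e ∩ H2.verts).Nonempty)
  edge_sub := by
    intro e he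
    rcases Finset.mem_union.mp he with he | he
    · rcases Finset.mem_union.mp he with he | he
      · exact (H1.edge_sub e he).trans Finset.subset_union_left
      · exact (H2.edge_sub e he).trans Finset.subset_union_right
    · exact (Finset.mem_powersetCard.mp (Finset.mem_filter.mp he).1).1
  edge_nonempty := by
    intro e he
    rcases Finset.mem_union.mp he with he | he
    · rcases Finset.mem_union.mp he with he | he
      · exact H1.edge_nonempty e he
      · exact H2.edge_nonempty e he
    · obtain ⟨x, hx⟩ := (Finset.mem_filter.mp he).2.1
      exact ⟨x, (Finset.mem_inter.mp hx).1⟩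

/-- The union of two hypergraphs. -/
def hUnion (H1 H2 : FinHypergraph) : FinHypergraph where
  verts := H1.verts ∪ H2.verts
  edges := H1.edges ∪ H2.edges
  edge_sub := by
    intro e he
    rcases Finset.mem_union.mp he with he | he
    · exact (H1.edge_sub e he).trans Finset.subset_union_left
    · exact (H2.edge_sub e he).trans Finset.subset_union_right
  edge_nonempty := by
    intro e he
    rcases Finset.mem_union.mp he with he | he
    · exact H1.edge_nonempty e he
    · exact H2.edge_nonempty e he

/-- The union of the hypergraphs `f 0, …, f (m-1)`. -/
def unionOver (m : ℕ) (f : ℕ → FinHypergraph) : FinHypergraph where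
  verts := (Finset.range m).biUnion (fun i => (f i).verts)
  edges := (Finset.range m).biUnion (fun i => (f i).edges)
  edge_sub := by
    intro e he
    obtain ⟨i, hi, hei⟩ := Finset.mem_biUnion.mp he
    exact ((f i).edge_sub e hei).trans (Finset.subset_biUnion_of_mem (fun i => (f i).verts) hi)
  edge_nonempty := by
    intro e he
    obtain ⟨i, _, hei⟩ := Finset.mem_biUnion.mp he
    exact (f i).edge_nonempty e hei

/-- `C` is a component of `G`: a maximal connected subhypergraph. -/
def IsComponent (G C : FinHypergraph) : Prop :=
  C.IsSub G ∧ C.Connected ∧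
    ∀ C' : FinHypergraph, C'.IsSub G → C'.Connected → C.IsSub C' → C' = C

/-- `(S, H₁, H₂)` is a separation triple of `H`: `S` is a minimum vertex-cut,
`H₁ = H[S ∪ V(C₁)]` and `H₂ = H[S ∪ V(C₂)]`, where `C₁` is a component of `H - S`
and `C₂ = H - (S ∪ V(C₁))`. -/
def IsSeparationTriple (H : FinHypergraph) (S : Finset ℕ) (H1 H2 : FinHypergraph) : Prop :=
  H.IsVertexCut S ∧ (∀ X : Finset ℕ, H.IsVertexCut X → S.card ≤ X.card) ∧
    ∃ C1 : FinHypergraph, IsComponent (H.induce (H.verts \ S)) C1 ∧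
      H1 = H.induce (S ∪ C1.verts) ∧
      H2 = H.induce (S ∪ (H.verts \ (S ∪ C1.verts)))

end FinHypergraph

/-- The hypergraph `H_U(n;k,r) = ((p-1)K_k^r ∪ K_q^r) ∨_r (K_k^r)^c`, built from
pairwise disjoint vertex sets `A 0, …, A (p-2)` (each of size `k`), `B` (of size `q`)
and `C` (of size `k`). -/
def HU (p r : ℕ) (A : ℕ → Finset ℕ) (B C : Finset ℕ) : FinHypergraph :=
  FinHypergraph.rJoin
    (FinHypergraph.hUnion
      (FinHypergraph.unionOver (p - 1) (fun i => FinHypergraph.completeHG (A i) r))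
      (FinHypergraph.completeHG B r))
    (FinHypergraph.emptyHG C) r

/-- For `k, r ≥ 2`, `n ≥ 2k` and `n = pk + q` with `1 ≤ q ≤ k`, the
hypergraph `H_U(n;k,r)` satisfies `|E| ≤ C(n,r) - C(n-k,r) + (n/k - 2)·C(k,r)`,
with equality when `k ∣ n`. -/
theorem stmt_11 (n k r p q : ℕ) (hk : 2 ≤ k) (hr : 2 ≤ r) (hn : 2 * k ≤ n)
    (hq1 : 1 ≤ q) (hqk : q ≤ k) (hpq : n = p * k + q)
    (A : ℕ → Finset ℕ) (B C : Finset ℕ)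
    (hA : ∀ i < p - 1, (A i).card = k) (hB : B.card = q) (hC : C.card = k)
    (hAA : ∀ i < p - 1, ∀ j < p - 1, i ≠ j → Disjoint (A i) (A j))
    (hABd : ∀ i < p - 1, Disjoint (A i) B) (hACd : ∀ i < p - 1, Disjoint (A i) C)
    (hBC : Disjoint B C) :
    (((HU p r A B C).edges.card : ℝ) ≤
        (n.choose r : ℝ) - ((n - k).choose r : ℝ)
          + ((n : ℝ) / (k : ℝ) - 2) * (k.choose r : ℝ)) ∧
    (k ∣ n →
      ((HU p r A B C).edges.card : ℝ) =
        (n.choose r : ℝ) - ((n - k).choose r : ℝ)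
          + ((n : ℝ) / (k : ℝ) - 2) * (k.choose r : ℝ)) := by
  classical
  have hk0 : 0 < k := by omega
  have hr0 : 0 < r := by omega
  have hp1 : 1 ≤ p := by nlinarith
  -- vertex sets
  set AU : Finset ℕ := (Finset.range (p-1)).biUnion A with hAUdef
  set V1 : Finset ℕ := AU ∪ B with hV1def
  set V : Finset ℕ := V1 ∪ C with hVdef
  have hAUB : Disjoint AU B := by
    rw [hAUdef, Finset.disjoint_biUnion_left]
    intro i hi; exact hABd i (Finset.mem_range.mp hi)
  have hAUC : Disjoint AU C := by
    rw [hAUdef, Finset.disjoint_biUnion_left]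
    intro i hi; exact hACd i (Finset.mem_range.mp hi)
  have hV1C : Disjoint V1 C := by
    rw [hV1def, Finset.disjoint_union_left]; exact ⟨hAUC, hBC⟩
  have hAUcard : AU.card = (p-1) * k := by
    rw [hAUdef, Finset.card_biUnion]
    · rw [Finset.sum_congr rfl (fun i hi => hA i (Finset.mem_range.mp hi)),
        Finset.sum_const, smul_eq_mul, Finset.card_range]
    · intro i hi j hj hij
      exact hAA i (Finset.mem_range.mp hi) j (Finset.mem_range.mp hj) hij
  have hpk : k ≤ p * k := Nat.le_mul_of_pos_left k hp1
  have hp1k : (p-1) * k = p * k - k := Nat.sub_one_mul p k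
  have hV1card : V1.card = n - k := by
    rw [hV1def, Finset.card_union_of_disjoint hAUB, hAUcard, hB]; omega
  have hVcard : V.card = n := by
    rw [hVdef, Finset.card_union_of_disjoint hV1C, hV1card, hC]; omega
  -- the complete hypergraph on W has exactly `W.card.choose r` edges
  have hcomp : ∀ W : Finset ℕ, (FinHypergraph.completeHG W r).edges = W.powersetCard r := by
    intro W
    apply Finset.filter_true_of_mem
    intro e he
    exact Finset.card_pos.mp (by rw [(Finset.mem_powersetCard.mp he).2]; exact hr0)
  -- disjoint vertex sets give disjoint edge sets
  have hpd : ∀ W1 W2 : Finset ℕ, Disjoint W1 W2 →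
      Disjoint (W1.powersetCard r) (W2.powersetCard r) := by
    intro W1 W2 h
    rw [Finset.disjoint_left]
    intro e h1 h2
    rw [Finset.mem_powersetCard] at h1 h2
    obtain ⟨x, hx⟩ := Finset.card_pos.mp (h1.2 ▸ hr0)
    exact (Finset.disjoint_left.mp h) (h1.1 hx) (h2.1 hx)
  -- describe the edge set of HU
  set EA : Finset (Finset ℕ) := (Finset.range (p-1)).biUnion (fun i => (A i).powersetCard r)
    with hEAdef
  set J : Finset (Finset ℕ) := (V.powersetCard r).filter
    (fun e => (e ∩ V1).Nonempty ∧ (e ∩ C).Nonempty) with hJdef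
  have hedges : (HU p r A B C).edges = (EA ∪ B.powersetCard r) ∪ J := by
    simp only [HU, FinHypergraph.rJoin, FinHypergraph.hUnion, FinHypergraph.unionOver,
      FinHypergraph.emptyHG, hcomp, hEAdef, hJdef, hV1def, hVdef, hAUdef,
      Finset.union_empty]
    rfl
  have hEAsub : ∀ e ∈ EA ∪ B.powersetCard r, e ⊆ V1 := by
    intro e he
    rcases Finset.mem_union.mp he with he | he
    · obtain ⟨i, hi, hei⟩ := Finset.mem_biUnion.mp he
      refine (Finset.mem_powersetCard.mp hei).1.trans ?_
      rw [hV1def]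
      exact (Finset.subset_biUnion_of_mem A hi).trans Finset.subset_union_left
    · exact (Finset.mem_powersetCard.mp he).1.trans (hV1def ▸ Finset.subset_union_right)
  have hdisjJ : Disjoint (EA ∪ B.powersetCard r) J := by
    rw [Finset.disjoint_left]
    intro e he heJ
    obtain ⟨x, hx⟩ := (Finset.mem_filter.mp heJ).2.2
    rw [Finset.mem_inter] at hx
    exact (Finset.disjoint_left.mp hV1C) (hEAsub e he hx.1) hx.2
  have hdisjAB : Disjoint EA (B.powersetCard r) := by
    rw [hEAdef, Finset.disjoint_biUnion_left]
    intro i hi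
    exact hpd _ _ (hABd i (Finset.mem_range.mp hi))
  have hEAcard : EA.card = (p-1) * k.choose r := by
    rw [hEAdef, Finset.card_biUnion]
    · rw [Finset.sum_congr rfl (fun i hi => by
        rw [Finset.card_powersetCard, hA i (Finset.mem_range.mp hi)]),
        Finset.sum_const, smul_eq_mul, Finset.card_range]
    · intro i hi j hj hij
      exact hpd _ _ (hAA i (Finset.mem_range.mp hi) j (Finset.mem_range.mp hj) hij)
  -- count the join edges
  have hfilter : (V.powersetCard r).filter
      (fun e => ¬((e ∩ V1).Nonempty ∧ (e ∩ C).Nonempty)) =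
      V1.powersetCard r ∪ C.powersetCard r := by
    ext e
    simp only [Finset.mem_filter, Finset.mem_union, Finset.mem_powersetCard]
    constructor
    · rintro ⟨⟨hsub, hcard⟩, h⟩
      rw [not_and_or, Finset.not_nonempty_iff_eq_empty, Finset.not_nonempty_iff_eq_empty] at h
      rcases h with h | h
      · right
        refine ⟨fun x hx => ?_, hcard⟩
        rcases Finset.mem_union.mp (hsub hx) with hx1 | hx1
        · exact absurd (Finset.mem_inter.mpr ⟨hx, hx1⟩) (by simp [h])
        · exact hx1
      · left
        refine ⟨fun x hx => ?_, hcard⟩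
        rcases Finset.mem_union.mp (hsub hx) with hx1 | hx1
        · exact hx1
        · exact absurd (Finset.mem_inter.mpr ⟨hx, hx1⟩) (by simp [h])
    · rintro (⟨hsub, hcard⟩ | ⟨hsub, hcard⟩)
      · refine ⟨⟨hsub.trans (hVdef ▸ Finset.subset_union_left), hcard⟩, ?_⟩
        rintro ⟨-, ⟨x, hx⟩⟩
        rw [Finset.mem_inter] at hx
        exact (Finset.disjoint_left.mp hV1C) (hsub hx.1) hx.2
      · refine ⟨⟨hsub.trans (hVdef ▸ Finset.subset_union_right), hcard⟩, ?_⟩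
        rintro ⟨⟨x, hx⟩, -⟩
        rw [Finset.mem_inter] at hx
        exact (Finset.disjoint_left.mp hV1C) hx.2 (hsub hx.1)
  have hJcard : J.card + ((n-k).choose r + k.choose r) = n.choose r := by
    have h1 := Finset.card_filter_add_card_filter_not
      (s := V.powersetCard r) (p := fun e => (e ∩ V1).Nonempty ∧ (e ∩ C).Nonempty)
    rw [hfilter, Finset.card_union_of_disjoint (hpd _ _ hV1C),
      Finset.card_powersetCard, Finset.card_powersetCard, Finset.card_powersetCard,
      hV1card, hVcard, hC] at h1
    rw [← hJdef] at h1
    exact h1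
  -- total edge count
  have hcard : (HU p r A B C).edges.card + ((n-k).choose r + k.choose r) =
      n.choose r + ((p-1) * k.choose r + q.choose r) := by
    rw [hedges, Finset.card_union_of_disjoint hdisjJ,
      Finset.card_union_of_disjoint hdisjAB, hEAcard, Finset.card_powersetCard, hB]
    omega
  -- key numeric inequality : k * C(q,r) ≤ q * C(k,r)
  have hkey : k * q.choose r ≤ q * k.choose r := by
    have hq' : q - 1 + 1 = q := by omega
    have hk' : k - 1 + 1 = k := by omega
    have hr' : r - 1 + 1 = r := by omega
    have e1 : q * (q-1).choose (r-1) = q.choose r * r := by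
      conv_lhs => rw [← hq']
      conv_rhs => rw [← hq', ← hr']
      exact Nat.add_one_mul_choose_eq (q-1) (r-1)
    have e2 : k * (k-1).choose (r-1) = k.choose r * r := by
      conv_lhs => rw [← hk']
      conv_rhs => rw [← hk', ← hr']
      exact Nat.add_one_mul_choose_eq (k-1) (r-1)
    have e3 : (q-1).choose (r-1) ≤ (k-1).choose (r-1) :=
      Nat.choose_le_choose (r-1) (by omega)
    have : (k * q.choose r) * r ≤ (q * k.choose r) * r := by
      calc (k * q.choose r) * r = k * (q.choose r * r) := by ring
        _ = k * (q * (q-1).choose (r-1)) := by rw [e1]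
        _ = q * (k * (q-1).choose (r-1)) := by ring
        _ ≤ q * (k * (k-1).choose (r-1)) := by
            exact Nat.mul_le_mul_left q (Nat.mul_le_mul_left k e3)
        _ = q * (k.choose r * r) := by rw [e2]
        _ = (q * k.choose r) * r := by ring
    exact Nat.le_of_mul_le_mul_right this hr0
  -- pass to the reals
  have hkR : (0:ℝ) < (k:ℝ) := by exact_mod_cast hk0
  have hE : ((HU p r A B C).edges.card : ℝ) =
      (n.choose r : ℝ) - ((n-k).choose r : ℝ) + ((p:ℝ) - 2) * (k.choose r : ℝ)
        + (q.choose r : ℝ) := by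
    have h := hcard
    have hcast : ((HU p r A B C).edges.card : ℝ) + (((n-k).choose r : ℝ) + (k.choose r : ℝ)) =
        (n.choose r : ℝ) + (((p-1 : ℕ) : ℝ) * (k.choose r : ℝ) + (q.choose r : ℝ)) := by
      exact_mod_cast h
    have hp1R : ((p-1 : ℕ) : ℝ) = (p:ℝ) - 1 := by
      rw [Nat.cast_sub hp1]; simp
    rw [hp1R] at hcast
    linarith
  have hdiv : (n:ℝ) / (k:ℝ) = (p:ℝ) + (q:ℝ) / (k:ℝ) := by
    have hnR : (n:ℝ) = (p:ℝ) * (k:ℝ) + (q:ℝ) := by exact_mod_cast hpq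
    rw [hnR, add_div, mul_div_assoc, div_self (ne_of_gt hkR), mul_one]
  have hkeyR : (q.choose r : ℝ) ≤ (q:ℝ) / (k:ℝ) * (k.choose r : ℝ) := by
    rw [div_mul_eq_mul_div, le_div_iff₀ hkR]
    calc (q.choose r : ℝ) * (k:ℝ) = (k:ℝ) * (q.choose r : ℝ) := by ring
      _ ≤ (q:ℝ) * (k.choose r : ℝ) := by exact_mod_cast hkey
  constructor
  · rw [hE, hdiv]
    nlinarith [hkeyR]
  · intro hdvd
    have hqeq : q = k := by
      have : k ∣ q := (Nat.dvd_add_right (Dvd.intro_left p rfl)).mp (hpq ▸ hdvd)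
      exact Nat.le_antisymm hqk (Nat.le_of_dvd (by omega) this)
    subst hqeq
    rw [hE, hdiv]
    have : (q:ℝ) / (q:ℝ) = 1 := div_self (ne_of_gt hkR)
    rw [this]
    ring
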